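/- Let E be a de Branges function of exponential type (i.e., there exist constants C > 0 and τ > 0 with |E(z)| ≤ C·exp(τ·|z|) for all z ∈ ℂ) with no zeros on the real axis. Then the function x ↦ (d/dy |E(x+iy)|² |_{y=0}) / ((1 + x²)·|E(x)|²) is integrable on ℝ. -/

import Mathlib

open MeasureTheory

section Aux

open Real Complex Metric

private lemma hasDerivAt_conj_conj' {f : ℂ → ℂ} {z d : ℂ}
    (h : HasDerivAt f d ((starRingEnd ℂ) z)) :
    HasDerivAt (fun w => (starRingEnd ℂ) (f ((starRingEnd ℂ) w))) ((starRingEnd ℂ) d) z := by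
  rw [hasDerivAt_iff_tendsto] at h ⊢
  have hc : Filter.Tendsto (fun w : ℂ => (starRingEnd ℂ) w) (nhds z) (nhds ((starRingEnd ℂ) z)) :=
    (continuous_conj.tendsto z)
  have := h.comp hc
  refine this.congr (fun w => ?_)
  simp only [Function.comp]
  rw [← map_sub (starRingEnd ℂ), RCLike.norm_conj]
  congr 1
  have : (starRingEnd ℂ) (f ((starRingEnd ℂ) w)) - (starRingEnd ℂ) (f ((starRingEnd ℂ) z))
      - (w - z) • (starRingEnd ℂ) d
      = (starRingEnd ℂ) (f ((starRingEnd ℂ) w) - f ((starRingEnd ℂ) z)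
          - ((starRingEnd ℂ) w - (starRingEnd ℂ) z) • d) := by
    simp [map_sub, map_mul, smul_eq_mul]
  rw [this, RCLike.norm_conj, map_sub]

private lemma hasDerivAt_abs_sq' {f : ℝ → ℂ} {f' : ℂ} {y : ℝ} (h : HasDerivAt f f' y) :
    HasDerivAt (fun t => ‖f t‖ ^ 2) (2 * ((starRingEnd ℂ) (f y) * f').re) y := by
  have hre : HasDerivAt (fun t => (f t).re) f'.re y :=
    (Complex.reCLM.hasFDerivAt.comp_hasDerivAt y h : _)
  have him : HasDerivAt (fun t => (f t).im) f'.im y :=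
    (Complex.imCLM.hasFDerivAt.comp_hasDerivAt y h : _)
  have := (hre.mul hre).add (him.mul him)
  have h2 : HasDerivAt (fun t => (f t).re * (f t).re + (f t).im * (f t).im)
      (2 * ((starRingEnd ℂ) (f y) * f').re) y := by
    refine this.congr_deriv ?_
    simp [Complex.mul_re]
    ring
  refine h2.congr_deriv ?_ |>.congr_of_eventuallyEq ?_
  · rfl
  · filter_upwards with t
    rw [Complex.sq_norm, Complex.normSq_apply]

private lemma hasDerivAt_vert' (E : ℂ → ℂ) (hE : Differentiable ℂ E) (x : ℝ) (v : ℂ) (y : ℝ) :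
    HasDerivAt (fun t : ℝ => E ((x : ℂ) + t * v)) (v * deriv E ((x:ℂ) + y * v)) y := by
  have hc : HasDerivAt (fun t : ℝ => (x : ℂ) + t * v) v y := by
    simpa using ((Complex.ofRealCLM.hasDerivAt (x := y)).mul_const v).const_add (x : ℂ)
  have hd := (hE ((x:ℂ) + y * v)).hasDerivAt
  have h := hd.scomp y hc
  rw [smul_eq_mul] at h
  exact h

private lemma deriv_nonneg_at_zero' {g : ℝ → ℝ} {d : ℝ} (hg : HasDerivAt g d 0) (h0 : g 0 = 0)
    (hpos : ∀ y : ℝ, 0 < y → 0 ≤ g y) : 0 ≤ d := by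
  have h := (hg.hasDerivWithinAt (s := Set.Ioi (0:ℝ)))
  rw [hasDerivWithinAt_iff_tendsto_slope] at h
  have hset : Set.Ioi (0:ℝ) \ {0} = Set.Ioi 0 := by
    ext t; simp only [Set.mem_diff, Set.mem_Ioi, Set.mem_singleton_iff]
    constructor
    · rintro ⟨h1, -⟩; exact h1
    · intro ht; exact ⟨ht, ne_of_gt ht⟩
  rw [hset] at h
  have hslope : ∀ᶠ y in nhdsWithin 0 (Set.Ioi (0:ℝ)), 0 ≤ slope g 0 y := by
    filter_upwards [self_mem_nhdsWithin] with y hy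
    have : slope g 0 y = g y / y := by simp [slope_def_field, h0, div_eq_inv_mul]
    rw [this]
    exact div_nonneg (hpos y hy) (le_of_lt hy)
  exact ge_of_tendsto h hslope

private lemma zero_count' (z₀ : ℂ) {r : ℝ} (hr : 0 < r) :
    ∀ (S : Finset ℂ) (f : ℂ → ℂ) (M : ℝ), Differentiable ℂ f →
    (∀ a ∈ S, a ∈ closedBall z₀ r ∧ f a = 0) →
    (∀ z ∈ sphere z₀ (3*r), ‖f z‖ ≤ M) →
    ‖f z₀‖ * 2 ^ S.card ≤ M := by
  intro S
  induction S using Finset.induction_on with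
  | empty =>
    intro f M hf hS hM
    simp only [Finset.card_empty, pow_zero, mul_one]
    have h3r : (0:ℝ) < 3 * r := by linarith
    refine norm_le_of_forall_mem_frontier_norm_le (isBounded_ball (x := z₀) (r := 3*r))
      hf.diffContOnCl ?_ ?_
    · rw [frontier_ball z₀ (ne_of_gt h3r)]
      exact hM
    · exact subset_closure (mem_ball_self h3r)
  | @insert a S' ha ih =>
    intro f M hf hS hM
    have hMnn : 0 ≤ M := by
      have hz : z₀ + 3*r ∈ sphere z₀ (3*r) := by
        simp only [mem_sphere, Complex.dist_eq]
        rw [add_sub_cancel_left]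
        rw [show ((3:ℂ)*r) = ((3*r:ℝ):ℂ) by push_cast; ring]
        rw [Complex.norm_real, Real.norm_eq_abs, abs_of_pos (by linarith : (0:ℝ) < 3*r)]
      exact le_trans (norm_nonneg _) (hM _ hz)
    have haz : a ∈ closedBall z₀ r ∧ f a = 0 := hS a (Finset.mem_insert_self a S')
    set g : ℂ → ℂ := dslope f a with hg
    have hgd : Differentiable ℂ g := by
      rw [← differentiableOn_univ]
      exact (Complex.differentiableOn_dslope (by simp : Set.univ ∈ nhds a)).mpr
        hf.differentiableOn
    have hgS : ∀ b ∈ S', b ∈ closedBall z₀ r ∧ g b = 0 := by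
      intro b hb
      have hbz := hS b (Finset.mem_insert_of_mem hb)
      refine ⟨hbz.1, ?_⟩
      have hba : b ≠ a := by rintro rfl; exact ha hb
      rw [hg, dslope_of_ne f hba, slope_def_field, hbz.2, haz.2, sub_zero, div_eq_mul_inv,
        zero_mul]
    have h2r : (0:ℝ) < 2*r := by linarith
    have hgM : ∀ z ∈ sphere z₀ (3*r), ‖g z‖ ≤ M / (2*r) := by
      intro z hz
      have h1 : dist z z₀ = 3*r := mem_sphere.mp hz
      have h2 : dist a z₀ ≤ r := mem_closedBall.mp haz.1
      have h3 : dist z z₀ ≤ dist z a + dist a z₀ := dist_triangle z a z₀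
      have hza : (2:ℝ)*r ≤ ‖z - a‖ := by rw [← dist_eq_norm]; linarith
      have hzna : z ≠ a := by
        intro h; rw [h, sub_self, norm_zero] at hza; linarith
      have hge : ‖g z‖ = ‖f z‖ / ‖z - a‖ := by
        rw [hg, dslope_of_ne f hzna, slope_def_field, haz.2, sub_zero, norm_div]
      rw [hge]
      calc ‖f z‖ / ‖z - a‖ ≤ ‖f z‖ / (2*r) := by gcongr
        _ ≤ M / (2*r) := by gcongr; exact hM z hz
    have IH := ih g (M/(2*r)) hgd hgS hgM
    rcases eq_or_ne (f z₀) 0 with hfz | hfz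
    · rw [hfz, norm_zero, zero_mul]; exact hMnn
    · have hz₀a : z₀ ≠ a := by
        rintro rfl; exact hfz haz.2
      have hgz₀ : ‖g z₀‖ = ‖f z₀‖ / ‖z₀ - a‖ := by
        rw [hg, dslope_of_ne f hz₀a, slope_def_field, haz.2, sub_zero, norm_div]
      have hz₀anorm : ‖z₀ - a‖ ≤ r := by
        rw [← dist_eq_norm, dist_comm]; exact mem_closedBall.mp haz.1
      have hz₀apos : 0 < ‖z₀ - a‖ := by
        rw [norm_pos_iff, sub_ne_zero]; exact hz₀a
      have hle : ‖f z₀‖ / r ≤ ‖g z₀‖ := by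
        rw [hgz₀]; gcongr
      have hfin : ‖f z₀‖ / r * 2 ^ S'.card ≤ M / (2*r) :=
        le_trans (mul_le_mul_of_nonneg_right hle (by positivity)) IH
      have hmul := mul_le_mul_of_nonneg_right hfin (le_of_lt h2r)
      calc ‖f z₀‖ * 2 ^ (insert a S').card
          = (‖f z₀‖ / r * 2 ^ S'.card) * (2*r) := by
            rw [Finset.card_insert_of_notMem ha]
            field_simp
            ring
        _ ≤ (M / (2*r)) * (2*r) := hmul
        _ = M := by field_simp

private lemma level_re_zero' (w : ℂ) (m : ℤ) :
    (w * Complex.exp (-(Complex.arg w + (π/2 + (m:ℝ)*π)) * Complex.I)).re = 0 := by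
  set θ := Complex.arg w with hθ
  have hw : (‖w‖ : ℂ) * Complex.exp ((θ : ℝ) * Complex.I) = w :=
    Complex.norm_mul_exp_arg_mul_I w
  rw [← hw, mul_assoc, ← Complex.exp_add]
  have heq : (θ : ℝ) * Complex.I + -(↑θ + (↑π/2 + (m:ℝ)*↑π)) * Complex.I
      = ((-(π/2 + (m:ℝ)*π) : ℝ) : ℂ) * Complex.I := by
    push_cast
    ring
  rw [heq]
  have hre : (Complex.exp (((-(π/2 + (m:ℝ)*π) : ℝ) : ℂ) * Complex.I)).re
      = Real.cos (-(π/2 + (m:ℝ)*π)) := Complex.exp_ofReal_mul_I_re _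
  have hcos : Real.cos (-(π/2 + (m:ℝ)*π)) = 0 := by
    rw [Real.cos_neg, Real.cos_add, Real.cos_pi_div_two, Real.sin_pi_div_two,
      Real.sin_int_mul_pi]
    ring
  simp only [Complex.mul_re, Complex.ofReal_re, Complex.ofReal_im, zero_mul, sub_zero]
  rw [hre, hcos]
  ring

private lemma phase_count' {φ : ℝ → ℝ} (hφc : Continuous φ) {w : ℂ} {G : ℂ → ℂ}
    (hzero : ∀ x : ℝ, (w * Complex.exp (-(φ x) * Complex.I)).re = 0 → G ((x:ℝ):ℂ) = 0)
    {R : ℝ} (hR : 0 ≤ R) (n : ℕ)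
    (hgap : π * (n + 1) < φ R - φ (-R)) :
    ∃ S : Finset ℂ, S.card = n ∧ ∀ a ∈ S, a ∈ closedBall (0:ℂ) (R+1) ∧ G a = 0 := by
  have hπ : (0:ℝ) < π := Real.pi_pos
  set a := φ (-R) with hadef
  set b := φ R with hbdef
  have hab : a ≤ b := by nlinarith
  set θ := Complex.arg w with hθ
  set k₀ : ℤ := ⌈(a - θ - π/2)/π⌉ with hk₀
  have hk₀ge : a - θ - π/2 ≤ (k₀:ℝ)*π := by
    rw [hk₀]
    have := Int.le_ceil ((a - θ - π/2)/π)
    calc a - θ - π/2 = ((a - θ - π/2)/π)*π := by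
          rw [div_mul_cancel₀ _ (ne_of_gt hπ)]
      _ ≤ ((⌈(a - θ - π/2)/π⌉ : ℝ))*π := by gcongr
  have hk₀lt : (k₀:ℝ)*π < a - θ - π/2 + π := by
    rw [hk₀]
    calc ((⌈(a - θ - π/2)/π⌉:ℝ))*π < ((a - θ - π/2)/π + 1)*π := by
          have h := Int.ceil_lt_add_one ((a - θ - π/2)/π)
          nlinarith
      _ = a - θ - π/2 + π := by
          rw [add_mul, div_mul_cancel₀ _ (ne_of_gt hπ), one_mul]
  set ℓ : ℕ → ℝ := fun j => θ + (π/2 + ((k₀ + j + 1 : ℤ):ℝ)*π) with hℓ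
  have hℓmem : ∀ j : ℕ, j < n → a ≤ ℓ j ∧ ℓ j ≤ b := by
    intro j hj
    have hcast : ((k₀ + j + 1 : ℤ):ℝ) = (k₀:ℝ) + (j:ℝ) + 1 := by push_cast; ring
    constructor
    · rw [hℓ]; simp only [hcast]
      have : (0:ℝ) ≤ (j:ℝ) := Nat.cast_nonneg j
      nlinarith
    · rw [hℓ]; simp only [hcast]
      have hjn : (j:ℝ) + 1 ≤ (n:ℝ) := by exact_mod_cast hj
      nlinarith
  have hex : ∀ j : ℕ, j < n → ∃ x ∈ Set.Icc (-R) R, φ x = ℓ j := by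
    intro j hj
    have hsub := intermediate_value_Icc (by linarith : -R ≤ R) hφc.continuousOn
    have : ℓ j ∈ Set.Icc a b := ⟨(hℓmem j hj).1, (hℓmem j hj).2⟩
    obtain ⟨x, hx1, hx2⟩ := hsub this
    exact ⟨x, hx1, hx2⟩
  classical
  choose xs hxs1 hxs2 using hex
  set f : Fin n → ℂ := fun j => ((xs j j.2 : ℝ) : ℂ) with hf
  have hfinj : Function.Injective f := by
    intro j₁ j₂ hj
    have hx : xs j₁ j₁.2 = xs j₂ j₂.2 := by
      have hj' : ((xs j₁ j₁.2 : ℝ) : ℂ) = ((xs j₂ j₂.2 : ℝ) : ℂ) := hj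
      exact_mod_cast hj'
    have h1 : ℓ j₁ = ℓ j₂ := by
      rw [← hxs2 j₁ j₁.2, ← hxs2 j₂ j₂.2, hx]
    have : ((k₀ + j₁ + 1 : ℤ):ℝ)*π = ((k₀ + j₂ + 1 : ℤ):ℝ)*π := by
      simpa [hℓ] using h1
    have : ((j₁:ℕ):ℝ) = ((j₂:ℕ):ℝ) := by
      have := mul_right_cancel₀ (ne_of_gt hπ) this
      push_cast at this ⊢
      linarith
    exact Fin.ext (by exact_mod_cast this)
  refine ⟨Finset.image f Finset.univ, ?_, ?_⟩
  · rw [Finset.card_image_of_injective _ hfinj, Finset.card_univ, Fintype.card_fin]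
  · intro c hc
    simp only [Finset.mem_image, Finset.mem_univ, true_and] at hc
    obtain ⟨j, hj⟩ := hc
    constructor
    · rw [← hj]
      simp only [hf, mem_closedBall, Complex.dist_eq, sub_zero, Complex.norm_real, Real.norm_eq_abs]
      have := hxs1 j j.2
      rw [abs_le]
      constructor <;> [linarith [this.1]; linarith [this.2]]
    · rw [← hj]
      apply hzero
      rw [hxs2 j j.2]
      have := level_re_zero' w ((k₀ + j + 1 : ℤ))
      simpa [hℓ] using this

private lemma integrable_aux' {ψ : ℝ → ℝ} (hc : Continuous ψ) (h0 : ∀ x, 0 ≤ ψ x) {A B : ℝ}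
    (hΦ : ∀ R : ℝ, 0 ≤ R → ∫ t in Set.Icc (-R) R, ψ t ≤ A + B * R) :
    Integrable (fun x => 2 * ψ x / (1 + x^2)) := by
  set g : ℝ → ℝ := fun x => 2 * ψ x / (1 + x^2) with hg
  have hgc : Continuous g := by
    apply Continuous.div (by fun_prop) (by fun_prop)
    intro x; positivity
  have hgnn : ∀ x, 0 ≤ g x := by
    intro x
    have := h0 x
    show (0:ℝ) ≤ 2 * ψ x / (1 + x^2)
    positivity
  set s : ℕ → Set ℝ := fun n => match n with
    | 0 => Set.Icc (-1) 1
    | (m+1) => Set.Icc (-(2^(m+1):ℝ)) (2^(m+1)) \ Set.Ioo (-(2^m:ℝ)) (2^m) with hs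
  have hmeas : ∀ n, MeasurableSet (s n) := by
    intro n
    match n with
    | 0 => exact measurableSet_Icc
    | (m+1) => exact measurableSet_Icc.diff measurableSet_Ioo
  have hsub : ∀ n, s n ⊆ Set.Icc (-(2^n:ℝ)) (2^n) := by
    intro n
    match n with
    | 0 => simp [hs]
    | (m+1) => exact Set.diff_subset
  have hint : ∀ n, IntegrableOn g (s n) := fun n =>
    (hgc.integrableOn_Icc).mono_set (hsub n)
  have hintψ : ∀ (a b : ℝ), IntegrableOn (fun x => 2 * ψ x) (Set.Icc a b) :=
    fun a b => (by fun_prop : Continuous (fun x => 2 * ψ x)).integrableOn_Icc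
  have hψIcc : ∀ (R : ℝ), 0 ≤ R → ∫ x in Set.Icc (-R) R, 2 * ψ x ≤ 2*(A + B*R) := by
    intro R hR
    rw [MeasureTheory.integral_const_mul]
    have := hΦ R hR
    linarith
  have hbound : ∀ n : ℕ, ∫ x in s n, ‖g x‖ ≤
      match n with
      | 0 => 2*(A + B)
      | (m+1) => ((2^m:ℝ)^2)⁻¹ * (2*(A + B*2^(m+1))) := by
    intro n
    have hnorm : ∀ x, ‖g x‖ = g x := fun x => Real.norm_of_nonneg (hgnn x)
    match n with
    | 0 =>
      calc ∫ x in s 0, ‖g x‖ = ∫ x in s 0, g x := by simp_rw [hnorm]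
        _ ≤ ∫ x in Set.Icc (-(1:ℝ)) 1, 2 * ψ x := by
            apply setIntegral_mono_on (hint 0) ((hintψ (-1) 1).mono_set (hsub 0)) (hmeas 0)
            intro x hx
            show 2 * ψ x / (1 + x^2) ≤ 2 * ψ x
            have := h0 x
            apply div_le_self (by positivity)
            nlinarith [sq_nonneg x]
        _ ≤ 2*(A + B) := by simpa using hψIcc 1 zero_le_one
    | (m+1) =>
      have h2m : (0:ℝ) < 2^m := by positivity
      calc ∫ x in s (m+1), ‖g x‖ = ∫ x in s (m+1), g x := by simp_rw [hnorm]
        _ ≤ ∫ x in s (m+1), ((2^m:ℝ)^2)⁻¹ * (2 * ψ x) := by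
            apply setIntegral_mono_on (hint (m+1))
              (((hintψ _ _).mono_set (hsub (m+1))).const_mul _) (hmeas (m+1))
            intro x hx
            have hxlarge : (2^m:ℝ) ≤ |x| := by
              by_contra hcon
              push_neg at hcon
              exact hx.2 (Set.mem_Ioo.mpr (abs_lt.mp hcon))
            have hx2 : ((2^m:ℝ))^2 ≤ 1 + x^2 := by
              have h := pow_le_pow_left₀ (le_of_lt h2m) hxlarge 2
              rw [_root_.sq_abs] at h
              linarith
            show 2 * ψ x / (1 + x^2) ≤ ((2^m:ℝ)^2)⁻¹ * (2 * ψ x)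
            rw [div_eq_mul_inv, mul_comm (((2^m:ℝ))^2)⁻¹]
            have := h0 x
            apply mul_le_mul_of_nonneg_left _ (by positivity)
            exact inv_anti₀ (by positivity) hx2
        _ = ((2^m:ℝ)^2)⁻¹ * ∫ x in s (m+1), 2 * ψ x := by
            rw [MeasureTheory.integral_const_mul]
        _ ≤ ((2^m:ℝ)^2)⁻¹ * (2*(A + B*2^(m+1))) := by
            apply mul_le_mul_of_nonneg_left _ (by positivity)
            calc ∫ x in s (m+1), 2 * ψ x
                ≤ ∫ x in Set.Icc (-(2^(m+1):ℝ)) (2^(m+1)), 2 * ψ x := by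
                  apply setIntegral_mono_set (hintψ _ _)
                  · filter_upwards with x
                    have := h0 x
                    positivity
                  · exact HasSubset.Subset.eventuallyLE (hsub (m+1))
              _ ≤ 2*(A + B*2^(m+1)) := hψIcc (2^(m+1)) (by positivity)
  set c : ℕ → ℝ := fun n => match n with
    | 0 => 2*(A + B)
    | (m+1) => ((2^m:ℝ)^2)⁻¹ * (2*(A + B*2^(m+1))) with hcdef
  have hcsum : Summable c := by
    rw [← summable_nat_add_iff 1]
    have heq : (fun m : ℕ => c (m + 1)) = fun m : ℕ => 2*A*(1/4:ℝ)^m + 4*B*(1/2:ℝ)^m := by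
      funext m
      show ((2^m:ℝ)^2)⁻¹ * (2*(A + B*2^(m+1))) = 2*A*(1/4:ℝ)^m + 4*B*(1/2:ℝ)^m
      have h2 : ((2:ℝ)^m) ≠ 0 := by positivity
      have h5 : (1/4:ℝ)^m = (((2:ℝ)^m)^2)⁻¹ := by
        rw [one_div, inv_pow, ← pow_mul, mul_comm, pow_mul]
        norm_num
      have h6 : (1/2:ℝ)^m = ((2:ℝ)^m)⁻¹ := by
        rw [one_div, inv_pow]
      have h7 : (2:ℝ)^(m+1) = 2^m * 2 := pow_succ 2 m
      rw [h5, h6, h7]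
      field_simp
      ring
    rw [heq]
    apply Summable.add
    · exact ((summable_geometric_of_lt_one (by norm_num) (by norm_num)).mul_left _)
    · exact ((summable_geometric_of_lt_one (by norm_num) (by norm_num)).mul_left _)
  have hsummable : Summable (fun n => ∫ x in s n, ‖g x‖) := by
    apply Summable.of_nonneg_of_le _ hbound hcsum
    intro n
    apply setIntegral_nonneg (hmeas n)
    intro x _
    exact norm_nonneg _
  have hcover : (⋃ n, s n) = Set.univ := by
    rw [Set.eq_univ_iff_forall]
    intro x
    obtain ⟨m, hm⟩ := pow_unbounded_of_one_lt |x| (one_lt_two (α := ℝ))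
    have : ∀ k : ℕ, ∀ y : ℝ, |y| ≤ 2^k → y ∈ ⋃ n, s n := by
      intro k
      induction k with
      | zero =>
        intro y hy
        apply Set.mem_iUnion.mpr ⟨0, ?_⟩
        simp only [pow_zero] at hy
        exact abs_le.mp hy
      | succ k ih =>
        intro y hy
        by_cases hy2 : |y| ≤ 2^k
        · exact ih y hy2
        · apply Set.mem_iUnion.mpr ⟨k+1, ?_⟩
          push_neg at hy2
          refine ⟨abs_le.mp hy, ?_⟩
          intro hmem
          rw [Set.mem_Ioo] at hmem
          exact absurd (abs_lt.mpr hmem) (not_lt.mpr (le_of_lt hy2))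
    exact this m x (le_of_lt hm)
  have := integrableOn_iUnion_of_summable_integral_norm hint hsummable
  rw [hcover] at this
  exact integrableOn_univ.mp this

end Aux

/-- For a de Branges function `E` of exponential type with no real zeros, the function
`x ↦ (∂_y |E(x+iy)|²|_{y=0}) / ((1 + x²)·|E(x)|²)` is integrable on `ℝ`; this is the main
assumption of the paper, under which quasi-invariance of the determinantal point process
is proved. -/
theorem deBranges_exponential_type_main_assumption (E : ℂ → ℂ) (hE : Differentiable ℂ E)
    (hdB : ∀ z : ℂ, 0 < z.im →
      ‖(starRingEnd ℂ) (E ((starRingEnd ℂ) z))‖ < ‖E z‖)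
    (C τ : ℝ) (hC : 0 < C) (hτ : 0 < τ)
    (htype : ∀ z : ℂ, ‖E z‖ ≤ C * Real.exp (τ * ‖z‖))
    (hnz : ∀ x : ℝ, E (x : ℂ) ≠ 0) :
    Integrable (fun x : ℝ =>
      deriv (fun y : ℝ => (‖E (x + y * Complex.I)‖) ^ 2) 0
        / ((1 + x ^ 2) * (‖E (x : ℂ)‖) ^ 2)) := by
  classical
  have hE'c : Continuous (deriv E) := (hE.contDiff (n := 2)).continuous_deriv one_le_two
  set cc : ℝ → ℂ := fun t => deriv E (t:ℂ) / E (t:ℂ) with hcc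
  set ψ : ℝ → ℝ := fun t => -(cc t).im with hψ
  have hccont : Continuous cc := by
    apply Continuous.div (hE'c.comp Complex.continuous_ofReal)
      (hE.continuous.comp Complex.continuous_ofReal) hnz
  have hψcont : Continuous ψ := (Complex.continuous_im.comp hccont).neg
  -- the derivative in the statement
  have hder : ∀ x : ℝ, HasDerivAt (fun y : ℝ => (‖E (x + y * Complex.I)‖) ^ 2)
      (2 * ((starRingEnd ℂ) (E (x:ℂ)) * (Complex.I * deriv E (x:ℂ))).re) 0 := by
    intro x
    have hv := hasDerivAt_vert' E hE x Complex.I 0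
    have h2 := hasDerivAt_abs_sq' hv
    simpa using h2
  -- identity relating the derivative to ψ
  have hval_eq : ∀ x : ℝ, 2 * ((starRingEnd ℂ) (E (x:ℂ)) * (Complex.I * deriv E (x:ℂ))).re
      = 2 * Complex.normSq (E (x:ℂ)) * ψ x := by
    intro x
    have hx := hnz x
    have hnsq : Complex.normSq (E (x:ℂ)) ≠ 0 := ne_of_gt (Complex.normSq_pos.mpr hx)
    simp only [hψ, hcc, Complex.div_im, Complex.mul_re, Complex.mul_im, Complex.I_re,
      Complex.I_im, Complex.conj_re, Complex.conj_im]
    field_simp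
    ring
  -- nonnegativity of ψ
  have hψnn : ∀ x : ℝ, 0 ≤ ψ x := by
    intro x
    set K : ℝ := ((starRingEnd ℂ) (E (x:ℂ)) * (Complex.I * deriv E (x:ℂ))).re with hKdef
    set g : ℝ → ℝ := fun y => (‖E ((x:ℂ) + y * Complex.I)‖) ^ 2
      - (‖E ((x:ℂ) + y * (-Complex.I))‖) ^ 2 with hgdef
    have h1 := hasDerivAt_abs_sq' (hasDerivAt_vert' E hE x Complex.I 0)
    have h2 := hasDerivAt_abs_sq' (hasDerivAt_vert' E hE x (-Complex.I) 0)
    have hgd : HasDerivAt g (4*K) 0 := by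
      have h3 := h1.sub h2
      have hpt : ((x:ℂ) + ((0:ℝ):ℂ) * Complex.I) = (x:ℂ) := by simp
      have hpt2 : ((x:ℂ) + ((0:ℝ):ℂ) * (-Complex.I)) = (x:ℂ) := by simp
      rw [hpt, hpt2] at h3
      refine h3.congr_deriv ?_
      have hneg : (starRingEnd ℂ) (E (x:ℂ)) * (-Complex.I * deriv E (x:ℂ))
          = -((starRingEnd ℂ) (E (x:ℂ)) * (Complex.I * deriv E (x:ℂ))) := by ring
      rw [hneg, Complex.neg_re, hKdef]
      ring
    have hg0 : g 0 = 0 := by simp [hgdef]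
    have hgpos : ∀ y : ℝ, 0 < y → 0 ≤ g y := by
      intro y hy
      have him : (0:ℝ) < ((x:ℂ) + (y:ℝ) * Complex.I).im := by simp [hy]
      have hz := hdB ((x:ℂ) + (y:ℝ) * Complex.I) him
      have hconj : ((x:ℂ) + (y:ℝ) * (-Complex.I)) = (starRingEnd ℂ) ((x:ℂ) + (y:ℝ) * Complex.I) := by
        simp only [map_add, map_mul, Complex.conj_ofReal, Complex.conj_I]
      have habs : ‖E ((x:ℂ) + (y:ℝ) * (-Complex.I))‖
          = ‖(starRingEnd ℂ) (E ((starRingEnd ℂ) ((x:ℂ) + (y:ℝ) * Complex.I)))‖ := by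
        rw [hconj, Complex.norm_conj]
      have hlt : ‖E ((x:ℂ) + (y:ℝ) * (-Complex.I))‖
          < ‖E ((x:ℂ) + (y:ℝ) * Complex.I)‖ := by
        rw [habs]; exact hz
      have h4 : (‖E ((x:ℂ) + (y:ℝ) * (-Complex.I))‖)^2
          ≤ (‖E ((x:ℂ) + (y:ℝ) * Complex.I)‖)^2 := by
        apply pow_le_pow_left₀ (norm_nonneg _) (le_of_lt hlt)
      show (0:ℝ) ≤ (‖E ((x:ℂ) + y * Complex.I)‖) ^ 2
          - (‖E ((x:ℂ) + y * (-Complex.I))‖) ^ 2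
      linarith
    have hKnn := deriv_nonneg_at_zero' hgd hg0 hgpos
    have heq := hval_eq x
    rw [← hKdef] at heq
    have hnpos : 0 < Complex.normSq (E (x:ℂ)) := Complex.normSq_pos.mpr (hnz x)
    nlinarith
  -- logarithmic representation of E on the real axis
  set L : ℝ → ℂ := fun x => ∫ t in (0:ℝ)..x, cc t with hL
  have hLd : ∀ x : ℝ, HasDerivAt L (cc x) x := fun x =>
    (hccont.integral_hasStrictDerivAt 0 x).hasDerivAt
  have hEd : ∀ x : ℝ, HasDerivAt (fun t : ℝ => E (t:ℂ)) (deriv E (x:ℂ)) x := by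
    intro x
    have h5 := (hE (x:ℂ)).hasDerivAt
    have h := h5.scomp x (Complex.ofRealCLM.hasDerivAt (x := x))
    simp only [Complex.ofRealCLM_apply, Complex.ofReal_one, one_smul] at h
    exact h
  have hrep : ∀ x : ℝ, E (x:ℂ) = E 0 * Complex.exp (L x) := by
    have hDd : ∀ x : ℝ, HasDerivAt (fun y : ℝ => E (y:ℂ) * Complex.exp (-(L y))) 0 x := by
      intro x
      have h1 := (hEd x).mul (((hLd x).neg).cexp)
      refine h1.congr_deriv ?_
      symm
      have h2 : E (x:ℂ) * (cc x) = deriv E (x:ℂ) := by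
        simp only [hcc]; rw [mul_comm, div_mul_cancel₀ _ (hnz x)]
      linear_combination (Complex.exp (-(L x))) * h2
    have hconst : ∀ x : ℝ, E (x:ℂ) * Complex.exp (-(L x)) = E 0 * Complex.exp (-(L 0)) :=
      fun x => is_const_of_deriv_eq_zero (fun y => (hDd y).differentiableAt)
        (fun y => (hDd y).deriv) x 0
    intro x
    have h0 : E (0:ℂ) * Complex.exp (-(L 0)) = E 0 := by
      simp [hL]
    have hx := hconst x
    rw [h0] at hx
    calc E (x:ℂ) = E (x:ℂ) * Complex.exp (-(L x)) * Complex.exp (L x) := by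
          rw [mul_assoc, ← Complex.exp_add, neg_add_cancel, Complex.exp_zero, mul_one]
      _ = E 0 * Complex.exp (L x) := by
          rw [show E (x:ℂ) * Complex.exp (-(L x)) = E 0 from hx]
  set φ : ℝ → ℝ := fun x => -(L x).im with hφ
  have hφd : ∀ x : ℝ, HasDerivAt φ (ψ x) x := by
    intro x
    have h6 : HasDerivAt (fun y : ℝ => (L y).im) (cc x).im x :=
      (Complex.imCLM.hasFDerivAt.comp_hasDerivAt x (hLd x) : _)
    exact h6.neg
  have hφdiff : Differentiable ℝ φ := fun x => (hφd x).differentiableAt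
  have hφc : Continuous φ := hφdiff.continuous
  have hφint : ∀ R : ℝ, 0 ≤ R → ∫ t in Set.Icc (-R) R, ψ t = φ R - φ (-R) := by
    intro R hR
    have h1 : ∫ t in Set.Icc (-R) R, ψ t = ∫ t in (-R)..R, ψ t := by
      rw [intervalIntegral.integral_of_le (by linarith),
        MeasureTheory.integral_Icc_eq_integral_Ioc]
    rw [h1]
    exact intervalIntegral.integral_eq_sub_of_hasDerivAt (fun t _ => hφd t)
      (hψcont.intervalIntegrable _ _)
  -- the auxiliary entire function G
  set G : ℂ → ℂ := fun z => E z + (starRingEnd ℂ) (E ((starRingEnd ℂ) z)) with hG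
  have hGd : Differentiable ℂ G := by
    apply hE.add
    intro z
    exact (hasDerivAt_conj_conj' (hE _).hasDerivAt).differentiableAt
  have hGtype : ∀ z : ℂ, ‖G z‖ ≤ (2*C) * Real.exp (τ * ‖z‖) := by
    intro z
    calc ‖G z‖ ≤ ‖E z‖ + ‖(starRingEnd ℂ) (E ((starRingEnd ℂ) z))‖ := norm_add_le _ _
      _ = ‖E z‖ + ‖E ((starRingEnd ℂ) z)‖ := by
          rw [Complex.norm_conj]
      _ ≤ C * Real.exp (τ * ‖z‖) + C * Real.exp (τ * ‖(starRingEnd ℂ) z‖) :=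
          add_le_add (htype z) (htype _)
      _ = 2*C*Real.exp (τ * ‖z‖) := by rw [Complex.norm_conj]; ring
  have hGne : ∃ z₀ : ℂ, G z₀ ≠ 0 := by
    by_contra hcon
    push_neg at hcon
    have hI := hcon Complex.I
    simp only [hG] at hI
    have hneg : (starRingEnd ℂ) (E ((starRingEnd ℂ) Complex.I)) = -(E Complex.I) := by
      linear_combination hI
    have hlt := hdB Complex.I (by simp : (0:ℝ) < Complex.I.im)
    rw [hneg] at hlt
    have habsneg : ‖-(E Complex.I)‖ = ‖E Complex.I‖ :=
      norm_neg _
    rw [habsneg] at hlt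
    exact lt_irrefl _ hlt
  obtain ⟨z₀, hz₀⟩ := hGne
  have hGz₀pos : 0 < ‖G z₀‖ := norm_pos_iff.mpr hz₀
  -- zeros of G at points where the phase crosses the critical levels
  have hzero : ∀ x : ℝ, ((E 0) * Complex.exp (-(φ x) * Complex.I)).re = 0 → G ((x:ℝ):ℂ) = 0 := by
    intro x hx
    have hGx : G (x:ℂ) = E (x:ℂ) + (starRingEnd ℂ) (E (x:ℂ)) := by
      simp only [hG]
      rw [Complex.conj_ofReal]
    have hre : (E (x:ℂ)).re = 0 := by
      rw [hrep x]
      have hsplit : Complex.exp (L x)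
          = (Real.exp ((L x).re) : ℂ) * Complex.exp (((L x).im : ℝ) * Complex.I) := by
        calc Complex.exp (L x)
            = Complex.exp (((L x).re : ℂ) + ((L x).im : ℝ) * Complex.I) := by
              rw [Complex.re_add_im]
          _ = Complex.exp ((L x).re : ℂ) * Complex.exp (((L x).im : ℝ) * Complex.I) :=
              Complex.exp_add _ _
          _ = (Real.exp ((L x).re) : ℂ) * Complex.exp (((L x).im : ℝ) * Complex.I) := by
              rw [Complex.ofReal_exp]
      rw [hsplit]
      have him : ((L x).im : ℂ) = -((φ x : ℝ) : ℂ) := by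
        simp [hφ]
      have hcomm : E 0 * ((Real.exp ((L x).re) : ℂ) * Complex.exp (((L x).im : ℝ) * Complex.I))
          = (Real.exp ((L x).re) : ℂ) * (E 0 * Complex.exp (-(φ x : ℝ) * Complex.I)) := by
        rw [show (((L x).im : ℝ) : ℂ) * Complex.I = -((φ x : ℝ) : ℂ) * Complex.I by rw [him]]
        ring
      rw [hcomm, Complex.mul_re, Complex.ofReal_re, Complex.ofReal_im, hx]
      simp
    rw [hGx, Complex.add_conj, hre]
    simp
  -- growth bound for the phase via counting zeros of G
  have hπ := Real.pi_pos
  have hlog2 : (0:ℝ) < Real.log 2 := Real.log_pos one_lt_two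
  set Mf : ℝ → ℝ := fun R => 2*C * Real.exp (τ * (‖z₀‖ + 3*(R + 1 + ‖z₀‖)))
    with hMf
  set K : ℝ → ℝ := fun R => (Real.log (Mf R) - Real.log (‖G z₀‖))/Real.log 2 with hK
  have habsnn : 0 ≤ ‖z₀‖ := norm_nonneg z₀
  have hrpos : ∀ R : ℝ, 0 ≤ R → (0:ℝ) < R + 1 + ‖z₀‖ := by
    intro R hR; linarith
  have hMfpos : ∀ R : ℝ, 0 < Mf R := by
    intro R
    rw [hMf]
    positivity
  have hsphere : ∀ R : ℝ, 0 ≤ R →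
      ∀ z ∈ Metric.sphere z₀ (3*(R + 1 + ‖z₀‖)), ‖G z‖ ≤ Mf R := by
    intro R hR z hz
    have hd := Metric.mem_sphere.mp hz
    have htri : dist z 0 ≤ dist z z₀ + dist z₀ 0 := dist_triangle _ _ _
    have habs : ‖z‖ ≤ ‖z₀‖ + 3*(R + 1 + ‖z₀‖) := by
      have h1 : dist z 0 = ‖z‖ := by simp [Complex.dist_eq]
      have h2 : dist z₀ 0 = ‖z₀‖ := by simp [Complex.dist_eq]
      rw [h1, h2, hd] at htri
      linarith
    calc ‖G z‖ ≤ 2*C*Real.exp (τ * ‖z‖) := hGtype z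
      _ ≤ Mf R := by
          rw [hMf]
          have h2C : (0:ℝ) ≤ 2*C := by linarith
          have hexp : Real.exp (τ * ‖z‖)
              ≤ Real.exp (τ * (‖z₀‖ + 3*(R + 1 + ‖z₀‖))) := by
            apply Real.exp_le_exp.mpr
            apply mul_le_mul_of_nonneg_left habs (le_of_lt hτ)
          exact mul_le_mul_of_nonneg_left hexp h2C
  have hK0 : ∀ R : ℝ, 0 ≤ R → 0 ≤ K R := by
    intro R hR
    have hbase := zero_count' z₀ (hrpos R hR) ∅ G (Mf R) hGd (by simp) (hsphere R hR)
    simp only [Finset.card_empty, pow_zero, mul_one] at hbase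
    rw [hK]
    apply div_nonneg _ (le_of_lt hlog2)
    have hGnorm : ‖G z₀‖ = ‖G z₀‖ := rfl
    rw [hGnorm] at hbase
    have := Real.log_le_log hGz₀pos hbase
    linarith
  have hgrow : ∀ R : ℝ, 0 ≤ R → φ R - φ (-R) ≤ Real.pi * (K R + 2) := by
    intro R hR
    by_contra hcon
    push_neg at hcon
    set n : ℕ := ⌊K R⌋₊ + 1 with hn
    have hgap : Real.pi * (n + 1) < φ R - φ (-R) := by
      have h1 : (n:ℝ) ≤ K R + 1 := by
        rw [hn]; push_cast
        have := Nat.floor_le (hK0 R hR)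
        linarith
      nlinarith
    obtain ⟨S, hcard, hSmem⟩ := phase_count' hφc hzero hR n hgap
    have hmem : ∀ a ∈ S, a ∈ Metric.closedBall z₀ (R + 1 + ‖z₀‖) ∧ G a = 0 := by
      intro a ha
      refine ⟨?_, (hSmem a ha).2⟩
      have h1 := (hSmem a ha).1
      rw [Metric.mem_closedBall] at h1 ⊢
      have htri : dist a z₀ ≤ dist a 0 + dist 0 z₀ := dist_triangle _ _ _
      have h2 : dist 0 z₀ = ‖z₀‖ := by
        rw [dist_comm]; simp [Complex.dist_eq]
      linarith
    have hcount := zero_count' z₀ (hrpos R hR) S G (Mf R) hGd hmem (hsphere R hR)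
    rw [hcard] at hcount
    have hGnorm : ‖G z₀‖ = ‖G z₀‖ := rfl
    rw [hGnorm] at hcount
    have hlhspos : (0:ℝ) < ‖G z₀‖ * 2 ^ n := by positivity
    have hlog := Real.log_le_log hlhspos hcount
    rw [Real.log_mul (ne_of_gt hGz₀pos) (by positivity), Real.log_pow] at hlog
    have hnK : (n:ℝ) ≤ K R := by
      rw [hK, le_div_iff₀ hlog2]
      push_cast at hlog ⊢
      linarith
    have hnK2 : K R < n := by
      rw [hn]; push_cast
      exact Nat.lt_floor_add_one _
    linarith
  -- assemble the linear bound and conclude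
  set A := Real.pi * (K 0 + 2) with hA
  set B := Real.pi * (3*τ/Real.log 2) with hB
  have hKlin : ∀ R : ℝ, K R = K 0 + 3*τ/Real.log 2 * R := by
    intro R
    have hlogM : ∀ R' : ℝ, Real.log (Mf R')
        = Real.log (2*C) + τ * (‖z₀‖ + 3*(R' + 1 + ‖z₀‖)) := by
      intro R'
      rw [hMf]
      rw [Real.log_mul (by positivity) (Real.exp_ne_zero _), Real.log_exp]
    rw [hK]
    simp only
    rw [hlogM R, hlogM 0]
    field_simp
    ring
  have hΦbound : ∀ R : ℝ, 0 ≤ R → ∫ t in Set.Icc (-R) R, ψ t ≤ A + B * R := by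
    intro R hR
    rw [hφint R hR]
    calc φ R - φ (-R) ≤ Real.pi * (K R + 2) := hgrow R hR
      _ = A + B * R := by rw [hKlin R, hA, hB]; ring
  have hint := integrable_aux' hψcont hψnn hΦbound
  have hfun : (fun x : ℝ =>
      deriv (fun y : ℝ => (‖E (x + y * Complex.I)‖) ^ 2) 0
        / ((1 + x ^ 2) * (‖E (x : ℂ)‖) ^ 2))
      = fun x : ℝ => 2 * ψ x / (1 + x^2) := by
    funext x
    have hd0 : deriv (fun y : ℝ => (‖E (x + y * Complex.I)‖) ^ 2) 0
        = 2 * ((starRingEnd ℂ) (E (x:ℂ)) * (Complex.I * deriv E (x:ℂ))).re := (hder x).deriv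
    rw [hd0, hval_eq x, Complex.sq_norm]
    have hnsq : Complex.normSq (E (x:ℂ)) ≠ 0 := ne_of_gt (Complex.normSq_pos.mpr (hnz x))
    have h1x : (1:ℝ) + x^2 ≠ 0 := by positivity
    field_simp
  rw [hfun]
  exact hint
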